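/- Let ε, μ be bounded, positive-definite, measurable with ε_* μ_* := limits such that ε(z₀)μ(z₀) > ε_*μ_* at some z₀, with all regularity assumptions for the Liouville transform. Then for λ sufficiently large, the Schrödinger operator H = −d²/dy² + V with V = η² − η' + λ ε̃^{-1}μ̃^{-1} has an eigenvalue strictly below λ/(ε_*μ_*); specifically, there is a test function ζ ∈ W^1_2(ℝ) with h[ζ] < (λ/(ε_*μ_*)) ‖ζ‖²_{L²}. -/

import Mathlib

open MeasureTheory

/-- Suppose the (Liouville-transformed) coefficients `ε̃, μ̃` are
positive, bounded, of class `W²_{1,loc}`, and `ε̃(y₀)μ̃(y₀) > ε_* μ_*` at some point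
`y₀`.  Then for `λ` sufficiently large the Schrödinger form
`h[ζ] = ∫(|ζ'|² + V_λ |ζ|²)`, `V_λ = η² − η' + λ ε̃⁻¹ μ̃⁻¹`, admits a test function
`ζ ∈ W¹₂(ℝ)` with `h[ζ] < (λ/(ε_* μ_*)) ‖ζ‖²_{L²}`; hence `H = −d²/dy² + V_λ` has
spectrum (an eigenvalue) strictly below `λ/(ε_* μ_*)`. -/
theorem eigenvalue_below_threshold_for_large_lambda
    (εt μt εt' μt' εt'' μt'' : ℝ → ℝ) (ε₀ ε₁ μ₀ μ₁ εs μs : ℝ)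
    (hε₀ : 0 < ε₀) (hμ₀ : 0 < μ₀) (hεs : 0 < εs) (hμs : 0 < μs)
    (hεb : ∀ w, ε₀ ≤ εt w ∧ εt w ≤ ε₁) (hμb : ∀ w, μ₀ ≤ μt w ∧ μt w ≤ μ₁)
    (hdε : ∀ w, HasDerivAt εt (εt' w) w) (hdε' : ∀ w, HasDerivAt εt' (εt'' w) w)
    (hdμ : ∀ w, HasDerivAt μt (μt' w) w) (hdμ' : ∀ w, HasDerivAt μt' (μt'' w) w)
    (hlocε : LocallyIntegrable εt'' volume) (hlocμ : LocallyIntegrable μt'' volume)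
    (y₀ : ℝ) (hpt : εs * μs < εt y₀ * μt y₀)
    (ν η : ℝ → ℝ) (V : ℝ → ℝ → ℝ)
    (hν : ∀ w, ν w = εt w ^ ((1:ℝ)/4) * μt w ^ (-(1:ℝ)/4))
    (hη : ∀ w, η w = deriv ν w / ν w)
    (hV : ∀ l w, V l w = (η w) ^ 2 - deriv η w + l / (εt w * μt w)) :
    ∃ Λ : ℝ, ∀ l : ℝ, Λ ≤ l →
      ∃ ζ : ℝ → ℝ, ContDiff ℝ 1 ζ ∧ HasCompactSupport ζ ∧
        0 < (∫ w, (ζ w) ^ 2) ∧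
        (∫ w, ((deriv ζ w) ^ 2 + V l w * (ζ w) ^ 2))
          < (l / (εs * μs)) * ∫ w, (ζ w) ^ 2 := by
  -- positivity of coefficients
  have hεpos : ∀ w, 0 < εt w := fun w => lt_of_lt_of_le hε₀ (hεb w).1
  have hμpos : ∀ w, 0 < μt w := fun w => lt_of_lt_of_le hμ₀ (hμb w).1
  have hprodpos : ∀ w, 0 < εt w * μt w := fun w => mul_pos (hεpos w) (hμpos w)
  have hsp : 0 < εs * μs := mul_pos hεs hμs
  -- the midpoint constant
  set c : ℝ := (1 / (εt y₀ * μt y₀) + 1 / (εs * μs)) / 2 with hc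
  have hlt : 1 / (εt y₀ * μt y₀) < 1 / (εs * μs) :=
    one_div_lt_one_div_of_lt hsp hpt
  have hcpos : 0 < c := by
    have h1 : 0 < 1 / (εt y₀ * μt y₀) := one_div_pos.mpr (hprodpos y₀)
    have h2 : 0 < 1 / (εs * μs) := one_div_pos.mpr hsp
    rw [hc]; linarith
  have hclt : c < 1 / (εs * μs) := by rw [hc]; linarith
  have hylt : 1 / (εt y₀ * μt y₀) < c := by rw [hc]; linarith
  -- continuity of 1/(εμ) at y₀
  have hcontA : ContinuousAt (fun w => 1 / (εt w * μt w)) y₀ := by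
    have h1 : ContinuousAt εt y₀ := (hdε y₀).continuousAt
    have h2 : ContinuousAt μt y₀ := (hdμ y₀).continuousAt
    exact (continuousAt_const.div (h1.mul h2) (hprodpos y₀).ne')
  have hev : ∀ᶠ w in nhds y₀, 1 / (εt w * μt w) < c :=
    hcontA.eventually_lt continuousAt_const hylt
  obtain ⟨r, hr, hball⟩ := Metric.eventually_nhds_iff_ball.mp hev
  -- bump function
  set f : ContDiffBump y₀ := ⟨r / 2, r, by linarith, by linarith⟩ with hf
  set ζ : ℝ → ℝ := (f : ℝ → ℝ) with hζ
  have hζc : Continuous ζ := (f.contDiff (n := 1)).continuous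
  have hζcs : HasCompactSupport ζ := f.hasCompactSupport
  have hζsq_cs : HasCompactSupport (fun w => ζ w ^ 2) := by
    have := hζcs.comp_left (g := fun x : ℝ => x ^ 2) (by simp)
    exact this
  have hζsq_int : Integrable (fun w => ζ w ^ 2) volume :=
    (hζc.pow 2).integrable_of_hasCompactSupport hζsq_cs
  -- ∫ ζ² > 0
  set I : ℝ := ∫ w, ζ w ^ 2 with hI
  have hIpos : 0 < I := by
    have hnn : ∀ w, 0 ≤ ζ w ^ 2 := fun w => sq_nonneg _
    rw [hI]
    refine (integral_pos_iff_support_of_nonneg hnn hζsq_int).mpr ?_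
    have hsub : Metric.ball y₀ (r / 2) ⊆ Function.support fun w => ζ w ^ 2 := by
      intro w hw
      have h1 : ζ w = 1 := f.one_of_mem_closedBall (Metric.ball_subset_closedBall hw)
      simp [Function.mem_support, h1]
    have : (0 : ENNReal) < volume (Metric.ball y₀ (r / 2)) := by
      rw [Real.volume_ball]
      simp only [ENNReal.ofReal_pos]
      linarith
    exact lt_of_lt_of_le this (measure_mono hsub)
  -- the λ-independent part of the form
  set F : ℝ → ℝ := fun w => deriv ζ w ^ 2 + (η w ^ 2 - deriv η w) * ζ w ^ 2 with hF
  set A : ℝ := ∫ w, F w with hA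
  set δ : ℝ := 1 / (εs * μs) - c with hδ
  have hδpos : 0 < δ := by rw [hδ]; linarith
  refine ⟨max 1 ((A + 1) / (δ * I)), fun l hl => ⟨ζ, f.contDiff (n := 1), hζcs, hIpos, ?_⟩⟩
  have hl1 : (1 : ℝ) ≤ l := le_trans (le_max_left _ _) hl
  have hl0 : 0 < l := lt_of_lt_of_le one_pos hl1
  have hlA : A + 1 ≤ l * (δ * I) := by
    have := le_trans (le_max_right 1 ((A + 1) / (δ * I))) hl
    calc A + 1 = ((A + 1) / (δ * I)) * (δ * I) := by
          field_simp
      _ ≤ l * (δ * I) := by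
          apply mul_le_mul_of_nonneg_right this (by positivity)
  -- the λ-dependent part
  set g : ℝ → ℝ := fun w => l / (εt w * μt w) * ζ w ^ 2 with hg
  have hgc : Continuous g := by
    apply Continuous.mul ?_ (hζc.pow 2)
    have h1 : Continuous εt := continuous_iff_continuousAt.mpr fun w => (hdε w).continuousAt
    have h2 : Continuous μt := continuous_iff_continuousAt.mpr fun w => (hdμ w).continuousAt
    exact continuous_const.div (h1.mul h2) fun w => (hprodpos w).ne'
  have hgcs : HasCompactSupport g := by
    apply HasCompactSupport.intro hζsq_cs.isCompact
    intro w hw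
    have : ζ w ^ 2 = 0 := by
      have := Set.notMem_subset (subset_tsupport _) hw
      simpa [Function.mem_support] using this
    simp [hg, this]
  have hgint : Integrable g volume := hgc.integrable_of_hasCompactSupport hgcs
  -- pointwise bound for g
  have hgle : ∀ w, g w ≤ l * c * ζ w ^ 2 := by
    intro w
    by_cases hw : ζ w = 0
    · simp [hg, hw]
    · have hwb : w ∈ Metric.ball y₀ r := by
        rw [← f.support_eq]
        exact Function.mem_support.mpr hw
      have h1 : 1 / (εt w * μt w) < c := hball w hwb
      have : l / (εt w * μt w) ≤ l * c := by
        rw [div_eq_mul_one_div]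
        exact mul_le_mul_of_nonneg_left h1.le hl0.le
      exact mul_le_mul_of_nonneg_right this (sq_nonneg _)
  have hgI : ∫ w, g w ≤ l * c * I := by
    have hint2 : Integrable (fun w => l * c * ζ w ^ 2) volume := hζsq_int.const_mul _
    calc ∫ w, g w ≤ ∫ w, l * c * ζ w ^ 2 := integral_mono hgint hint2 hgle
      _ = l * c * I := by rw [MeasureTheory.integral_const_mul]
  -- rewrite the integrand
  have hsplit : (fun w => deriv ζ w ^ 2 + V l w * ζ w ^ 2) = fun w => F w + g w := by
    funext w
    rw [hV l w]
    simp only [hF, hg]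
    ring
  rw [hsplit]
  by_cases hFi : Integrable F volume
  · rw [integral_add hFi hgint]
    have : A + l * c * I < l / (εs * μs) * I := by
      clear_value A I c δ
      have h1 : l / (εs * μs) * I = l * (1 / (εs * μs)) * I := by ring
      have h2 : l * (δ * I) = l * (1 / (εs * μs)) * I - l * c * I := by
        rw [hδ]; ring
      linarith
    calc A + ∫ w, g w ≤ A + l * c * I := by linarith
      _ < l / (εs * μs) * I := this
  · have : ¬ Integrable (fun w => F w + g w) volume := by
      intro h
      have h2 := h.sub hgint
      exact hFi (by simpa [Pi.sub_def] using h2)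
    rw [integral_undef this]
    positivity
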